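/- Let h̃ = x W ᵀ + b (single sample, one layer) with loss L = ℓ(h̃). If there exists an index i with ∂L/∂b_i ≠ 0, then the input x is uniquely determined by the layer gradients {∇_W L, ∇_b L}; that is, any two inputs x, x′ producing identical gradients with ∂L/∂b_i ≠ 0 for some common i must be equal. -/

import Mathlib

lemma aux_deriv {F : ℕ} (ℓ : (Fin F → ℝ) → ℝ) (hℓ : Differentiable ℝ ℓ)
    (a v : Fin F → ℝ) :
    deriv (fun t : ℝ => ℓ (a + t • v)) 0 = fderiv ℝ ℓ a v := by
  have h1 : HasDerivAt (fun t : ℝ => a + t • v) v 0 := by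
    simpa using ((hasDerivAt_id (0:ℝ)).smul_const v).const_add a
  have h2 := (hℓ (a + (0:ℝ) • v)).hasFDerivAt.comp_hasDerivAt 0 h1
  simp only [zero_smul, add_zero] at h2
  exact h2.deriv

/-- For h̃ = x Wᵀ + b with loss L = ℓ(h̃), any two inputs x, x'
producing identical layer gradients, with ∂L/∂b_i ≠ 0 at some common index i,
must be equal. -/
theorem stmt_13 (D F : ℕ)
    (ℓ : (Fin F → ℝ) → ℝ) (hℓ : Differentiable ℝ ℓ)
    (W : Matrix (Fin F) (Fin D) ℝ) (b : Fin F → ℝ)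
    (gradW : (Fin D → ℝ) → Fin F → Fin D → ℝ) (gradb : (Fin D → ℝ) → Fin F → ℝ)
    (hW : ∀ x i j, gradW x i j =
      deriv (fun t : ℝ => ℓ ((W + t • Matrix.single i j (1:ℝ)).mulVec x + b)) 0)
    (hb : ∀ x i, gradb x i =
      deriv (fun t : ℝ => ℓ (W.mulVec x + (b + t • (Pi.single i (1:ℝ) : Fin F → ℝ)))) 0)
    (x x' : Fin D → ℝ)
    (heqW : ∀ i j, gradW x i j = gradW x' i j)
    (heqb : ∀ i, gradb x i = gradb x' i)
    (hne : ∃ i, gradb x i ≠ 0) :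
    x = x' := by
  have hgb : ∀ (y : Fin D → ℝ) (i : Fin F),
      gradb y i = fderiv ℝ ℓ (W.mulVec y + b) (Pi.single i (1:ℝ)) := by
    intro y i
    rw [hb]
    have : (fun t : ℝ => ℓ (W.mulVec y + (b + t • (Pi.single i (1:ℝ) : Fin F → ℝ))))
        = fun t : ℝ => ℓ ((W.mulVec y + b) + t • (Pi.single i (1:ℝ) : Fin F → ℝ)) := by
      funext t; rw [add_assoc]
    rw [this, aux_deriv ℓ hℓ]
  have hgW : ∀ (y : Fin D → ℝ) (i : Fin F) (j : Fin D),
      gradW y i j = y j * gradb y i := by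
    intro y i j
    rw [hW]
    have hv : (Matrix.single i j (1:ℝ)).mulVec y
        = y j • (Pi.single i (1:ℝ) : Fin F → ℝ) := by
      funext k
      simp [Matrix.mulVec, Matrix.single, dotProduct, Pi.single_apply,
        ite_and, mul_comm, eq_comm]
    have : (fun t : ℝ => ℓ ((W + t • Matrix.single i j (1:ℝ)).mulVec y + b))
        = fun t : ℝ => ℓ ((W.mulVec y + b) + t • ((Matrix.single i j (1:ℝ)).mulVec y)) := by
      funext t
      rw [Matrix.add_mulVec, Matrix.smul_mulVec]
      ring_nf
    rw [this, aux_deriv ℓ hℓ, hv, map_smul, smul_eq_mul, hgb]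
  obtain ⟨i, hi⟩ := hne
  funext j
  have h1 : x j * gradb x i = x' j * gradb x i := by
    rw [← hgW, heqW, hgW, heqb]
  exact mul_right_cancel₀ hi h1
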